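/- Let $G$ be a weighted graph on vertex set $V$ with nonnegative edge weights, $h \ge 1$, and let $Q \subseteq V$ be a blocker set for the collection of $h$-hop shortest path trees, i.e., every shortest path of exactly $h$ hops in the collection contains a node of $Q$. Then for any two vertices $x, t$ whose shortest path has more than $h$ hops, the shortest path distance satisfies $\delta(x,t) = \delta_h(x, c_1) + \delta_h(c_1, c_2) + \cdots + \delta_h(c_l, t)$ for some sequence $c_1, \dots, c_l \in Q$, where each consecutive pair is at most $h$ hops apart along the shortest path; equivalently, $\delta(x,t) = \min_{c \in Q,\ hops(c,t) \le h \text{ on a shortest path}} \{\delta(x,c) + \delta_h(c,t)\}$. -/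

import Mathlib

/-- Weight of a walk given as a list of vertices (edge weights in `ℝ≥0∞`;
`⊤` encodes a missing edge). -/
noncomputable def chainWeight {V : Type*} (w : V → V → ENNReal) : List V → ENNReal
  | [] => 0
  | [_] => 0
  | a :: b :: l => w a b + chainWeight w (b :: l)

/-- `l` is a walk from `x` to `t`. -/
def IsWalk {V : Type*} (x t : V) (l : List V) : Prop :=
  l.head? = some x ∧ l.getLast? = some t

/-- Shortest-path distance `δ(x,t)`. -/
noncomputable def gdist {V : Type*} (w : V → V → ENNReal) (x t : V) : ENNReal :=
  ⨅ (l : List V) (_ : IsWalk x t l), chainWeight w l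

/-- `h`-hop shortest-path distance `δ_h(x,t)` (walks with at most `h` edges). -/
noncomputable def gdistH {V : Type*} (w : V → V → ENNReal) (h : ℕ) (x t : V) : ENNReal :=
  ⨅ (l : List V) (_ : IsWalk x t l ∧ l.length ≤ h + 1), chainWeight w l

lemma chainWeight_split {V : Type*} (w : V → V → ENNReal) :
    ∀ (l1 : List V) (c : V) (l2 : List V),
      chainWeight w (l1 ++ c :: l2) = chainWeight w (l1 ++ [c]) + chainWeight w (c :: l2)
  | [], c, l2 => by simp [chainWeight]
  | [a], c, l2 => by simp [chainWeight]
  | a :: b :: l1, c, l2 => by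
      have ih := chainWeight_split w (b :: l1) c l2
      simp only [List.cons_append, List.append_eq, chainWeight] at ih ⊢
      rw [ih, add_assoc]

lemma gdist_le {V : Type*} (w : V → V → ENNReal) {x t : V} {l : List V}
    (hl : IsWalk x t l) : gdist w x t ≤ chainWeight w l :=
  iInf₂_le l hl

lemma gdistH_le {V : Type*} (w : V → V → ENNReal) {h : ℕ} {x t : V} {l : List V}
    (hl : IsWalk x t l) (hlen : l.length ≤ h + 1) : gdistH w h x t ≤ chainWeight w l :=
  iInf₂_le l ⟨hl, hlen⟩

/-- A suffix of a finite-weight shortest walk is a shortest walk. -/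
lemma suffix_shortest {V : Type*} (w : V → V → ENNReal) {x t u : V} {p s2 : List V}
    (hw : IsWalk x t (p ++ u :: s2))
    (hcw : chainWeight w (p ++ u :: s2) = gdist w x t)
    (hne : gdist w x t ≠ ⊤)
    (hwalk : IsWalk u t (u :: s2)) :
    chainWeight w (u :: s2) = gdist w u t := by
  refine le_antisymm ?_ (gdist_le w hwalk)
  by_contra hlt
  push_neg at hlt
  have hsplit := chainWeight_split w p u s2
  have hpfin : chainWeight w (p ++ [u]) ≠ ⊤ := by
    intro htop
    rw [hsplit, htop, top_add] at hcw
    exact hne hcw.symm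
  -- extract a strictly better walk from u to t
  rw [gdist, iInf_lt_iff] at hlt
  obtain ⟨m, hm⟩ := hlt
  rw [iInf_lt_iff] at hm
  obtain ⟨hmw, hmlt⟩ := hm
  -- m starts with u
  have hmhead : m.head? = some u := hmw.1
  obtain ⟨m', rfl⟩ : ∃ m', m = u :: m' := by
    cases m with
    | nil => simp at hmhead
    | cons a m' =>
        have : a = u := by simpa using hmhead
        exact ⟨m', by rw [this]⟩
  have hmw2 : (u :: m').getLast? = some t := hmw.2
  -- splice
  have hw' : IsWalk x t (p ++ u :: m') := by
    constructor
    · have h1 := hw.1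
      simp only [List.head?_append] at h1 ⊢
      cases p <;> simpa using h1
    · have h2 := hw.2
      simp only [List.getLast?_append]
      cases m' with
      | nil => simpa using hmw2
      | cons a m'' => simpa using hmw2
  have hlt' : chainWeight w (p ++ u :: m') < gdist w x t := by
    rw [chainWeight_split w p u m', ← hcw, hsplit]
    exact ENNReal.add_lt_add_left hpfin hmlt
  exact absurd (gdist_le w hw') (not_le.mpr hlt')

/-- Blocker decomposition of long shortest paths: if `Q` hits every shortest path with
exactly `h` hops, and every shortest path from `x` to `t` has more than `h` hops (and one
exists), then `δ(x,t) = min_{c ∈ Q} (δ(x,c) + δ_h(c,t))`. -/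
theorem stmt18 {V : Type*} (w : V → V → ENNReal) (h : ℕ) (hh : 1 ≤ h) (Q : Set V)
    (hblock : ∀ (u v : V) (l : List V), IsWalk u v l → l.length = h + 1 →
      chainWeight w l = gdist w u v → ∃ c ∈ Q, c ∈ l)
    (x t : V)
    (hex : ∃ l, IsWalk x t l ∧ chainWeight w l = gdist w x t)
    (hlong : ∀ l, IsWalk x t l → chainWeight w l = gdist w x t → h + 1 < l.length) :
    gdist w x t = ⨅ c ∈ Q, (gdist w x c + gdistH w h c t) := by
  refine le_antisymm ?_ ?_
  · -- triangle inequality: gdist x t ≤ gdist x c + gdistH h c t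
    refine le_iInf₂ fun c hc => ?_
    simp only [gdist, gdistH, ENNReal.iInf_add, ENNReal.add_iInf]
    refine le_iInf fun la => le_iInf fun ha => le_iInf fun lb => le_iInf fun hb => ?_
    -- la : walk from c to t with ≤ h hops; lb : walk from x to c
    obtain ⟨haw, halen⟩ := ha
    obtain ⟨la', rfl⟩ : ∃ la', la = c :: la' := by
      have hhd : la.head? = some c := haw.1
      cases la with
      | nil => simp at hhd
      | cons a la' =>
          have : a = c := by simpa using hhd
          exact ⟨la', by rw [this]⟩
    have hblast : lb.getLast? = some c := hb.2
    have hbne : lb ≠ [] := by rintro rfl; simp at hblast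
    have hrepr : lb = lb.dropLast ++ [c] := by
      conv_lhs => rw [← List.dropLast_append_getLast hbne]
      rw [List.getLast?_eq_getLast hbne, Option.some.injEq] at hblast
      rw [hblast]
    have hwalk : IsWalk x t (lb.dropLast ++ c :: la') := by
      constructor
      · have h1 := hb.1
        rw [hrepr] at h1
        simp only [List.head?_append, List.head?_cons] at h1 ⊢
        exact h1
      · have h2 := haw.2
        simp only [List.getLast?_append]
        cases la' with
        | nil => simpa using h2
        | cons a l'' => simpa using h2
    have key : gdist w x t ≤ chainWeight w (c :: la') + chainWeight w lb := by
      calc gdist w x t ≤ chainWeight w (lb.dropLast ++ c :: la') := gdist_le w hwalk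
        _ = chainWeight w (lb.dropLast ++ [c]) + chainWeight w (c :: la') :=
            chainWeight_split w _ c _
        _ = chainWeight w lb + chainWeight w (c :: la') := by rw [← hrepr]
        _ = chainWeight w (c :: la') + chainWeight w lb := add_comm _ _
    exact key.trans_eq (add_comm _ _)
  · -- blocker direction
    by_cases htop : gdist w x t = ⊤
    · rw [htop]; exact le_top
    obtain ⟨l, hlw, hlcw⟩ := hex
    have hlen : h + 1 < l.length := hlong l hlw hlcw
    have hk1 : 1 ≤ l.length - (h + 1) := by omega
    obtain ⟨u, s', hus⟩ : ∃ u s', l.drop (l.length - (h + 1)) = u :: s' := by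
      cases hd : l.drop (l.length - (h + 1)) with
      | nil =>
          have := congrArg List.length hd
          simp at this
          omega
      | cons a s' => exact ⟨a, s', rfl⟩
    have hslen : (u :: s').length = h + 1 := by
      have hdrop := congrArg List.length hus
      simp at hdrop
      simp only [List.length_cons]
      omega
    have hl_eq : l = l.take (l.length - (h + 1)) ++ u :: s' := by
      rw [← hus]; exact (List.take_append_drop _ l).symm
    have htake_ne : l.take (l.length - (h + 1)) ≠ [] := by
      intro hnil
      have := congrArg List.length hnil
      simp at this
      omega
    have hswalk : IsWalk u t (u :: s') := by
      constructor
      · rfl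
      · have h2 := hlw.2
        rw [hl_eq] at h2
        simp only [List.getLast?_append] at h2
        cases s' with
        | nil => simpa using h2
        | cons a s'' => simpa using h2
    have hs_short : chainWeight w (u :: s') = gdist w u t := by
      refine suffix_shortest w (p := l.take (l.length - (h + 1))) ?_ ?_ htop hswalk
      · rw [← hl_eq]; exact hlw
      · rw [← hl_eq]; exact hlcw
    obtain ⟨c, hcQ, hcs⟩ := hblock u t (u :: s') hswalk hslen hs_short
    obtain ⟨s1, s2, hdecomp⟩ := List.append_of_mem hcs
    have hcs2walk : IsWalk c t (c :: s2) := by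
      constructor
      · rfl
      · have h2 := hswalk.2
        rw [hdecomp] at h2
        simp only [List.getLast?_append] at h2
        cases s2 with
        | nil => simpa using h2
        | cons a s'' => simpa using h2
    have hs'len : s'.length = h := by simpa using hslen
    have hcs2len : (c :: s2).length ≤ h + 1 := by
      have hlen2 := congrArg List.length hdecomp
      simp only [List.length_cons, List.length_append] at hlen2
      simp only [List.length_cons]
      omega
    have hl_eq2 : l = (l.take (l.length - (h + 1)) ++ s1) ++ c :: s2 := by
      rw [List.append_assoc, ← hdecomp]
      exact hl_eq
    have hwalkxc : IsWalk x c ((l.take (l.length - (h + 1)) ++ s1) ++ [c]) := by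
      constructor
      · have h1 := hlw.1
        rw [hl_eq2] at h1
        simp only [List.head?_append, List.head?_cons] at h1 ⊢
        exact h1
      · simp
    have key : gdist w x c + gdistH w h c t ≤ gdist w x t := by
      calc gdist w x c + gdistH w h c t
          ≤ chainWeight w ((l.take (l.length - (h + 1)) ++ s1) ++ [c])
              + chainWeight w (c :: s2) :=
            add_le_add (gdist_le w hwalkxc) (gdistH_le w hcs2walk hcs2len)
        _ = chainWeight w ((l.take (l.length - (h + 1)) ++ s1) ++ c :: s2) :=
            (chainWeight_split w _ c _).symm
        _ = gdist w x t := by rw [← hl_eq2]; exact hlcw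
    exact le_trans (iInf₂_le c hcQ) key
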